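/- Let R be a discrete valuation ring with uniformizer x, A = R[z]/(z^n), and M, N finitely generated A-modules, with M having no nonzero element annihilated by a power of x. Then z^{n-1} · Ext^1_A(M, N) = 0. -/

import Mathlib

set_option maxHeartbeats 1000000

open Polynomial

/-- The local model `A = R[z]/(z^n)` of a primitive multiple curve of multiplicity `n`. -/
abbrev Az (R : Type) [CommRing R] (n : ℕ) : Type :=
  R[X] ⧸ Ideal.span ({X ^ n} : Set R[X])

/-- The class of `z` (i.e. of `X`) in `A = R[z]/(z^n)`. -/
noncomputable def zc (R : Type) [CommRing R] (n : ℕ) : Az R n :=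
  Ideal.Quotient.mk _ X

/-- The submodule `z^i M` of `M` (first canonical filtration). -/
noncomputable def zpowSub (R : Type) [CommRing R] (n : ℕ) (M : Type) [AddCommGroup M]
    [Module (Az R n) M] (i : ℕ) : Submodule (Az R n) M :=
  LinearMap.range ((zc R n ^ i) • (LinearMap.id : M →ₗ[Az R n] M))

/-- The submodule `M^{(i)} = {u ∈ M : z^i • u = 0}` (second canonical filtration). -/
noncomputable def ztor (R : Type) [CommRing R] (n : ℕ) (M : Type) [AddCommGroup M]
    [Module (Az R n) M] (i : ℕ) : Submodule (Az R n) M :=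
  LinearMap.ker ((zc R n ^ i) • (LinearMap.id : M →ₗ[Az R n] M))

lemma zc_pow_n (R : Type) [CommRing R] (n : ℕ) : (zc R n)^n = 0 := by
  rw [zc, ← map_pow]
  exact Ideal.Quotient.eq_zero_iff_mem.2 (Ideal.subset_span rfl)

lemma zc_decomp (R : Type) [CommRing R] (n : ℕ) (b : Az R n) :
    ∃ (r : R) (c : Az R n), b = algebraMap R (Az R n) r + zc R n * c := by
  obtain ⟨p, rfl⟩ := Ideal.Quotient.mk_surjective b
  refine ⟨p.coeff 0, Ideal.Quotient.mk _ p.divX, ?_⟩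
  have : algebraMap R (Az R n) (p.coeff 0) = Ideal.Quotient.mk _ (C (p.coeff 0)) := rfl
  rw [this, zc, ← map_mul, ← map_add]
  congr 1
  rw [add_comm, X_mul_divX_add]

/-- Key lifting lemma: for `M` finite and x-torsion-free and any surjection `π : F → M`
of modules over `A = R[z]/(z^n)`, the map `z^(n-1) • id : M → M` lifts along `π`. -/
lemma key_lift (R : Type) [CommRing R] [IsDomain R] [IsDiscreteValuationRing R] (n : ℕ)
    (hn : n ≠ 0) (x : R) (hx : Irreducible x)
    (M : Type) [AddCommGroup M] [Module (Az R n) M] [Module.Finite (Az R n) M]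
    (htf : ∀ (u : M) (p : ℕ), (algebraMap R (Az R n) x) ^ p • u = 0 → u = 0)
    (F : Type) [AddCommGroup F] [Module (Az R n) F]
    (π : F →ₗ[Az R n] M) (hπ : Function.Surjective π) :
    ∃ σ : M →ₗ[Az R n] F, π ∘ₗ σ = (zc R n ^ (n-1)) • (LinearMap.id : M →ₗ[Az R n] M) := by
  set A := Az R n
  set z := zc R n with hz
  letI : Module R M := Module.compHom M (algebraMap R A)
  letI : IsScalarTower R A M :=
    ⟨fun r a m => by rw [Algebra.smul_def r a, mul_smul]; rfl⟩
  letI : Module R F := Module.compHom F (algebraMap R A)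
  letI : IsScalarTower R A F :=
    ⟨fun r a m => by rw [Algebra.smul_def r a, mul_smul]; rfl⟩
  haveI : Module.Finite R A :=
    Module.Finite.of_basis (AdjoinRoot.powerBasis' (monic_X_pow n)).basis
  haveI : Module.Finite R M := Module.Finite.trans A M
  haveI : IsNoetherian R M := inferInstance
  set W : Submodule R M := Submodule.restrictScalars R
    (LinearMap.range ((z ^ (n-1)) • (LinearMap.id : M →ₗ[A] M))) with hW
  haveI : Module.Finite R W := inferInstance
  haveI : NoZeroSMulDivisors R W := by
    refine ⟨fun {r} {w} h => ?_⟩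
    by_cases hr : r = 0
    · exact Or.inl hr
    · right
      obtain ⟨p, u, rfl⟩ := IsDiscreteValuationRing.eq_unit_mul_pow_irreducible hr hx
      have h1 : ((u:R) * x ^ p) • (w : M) = 0 := by
        have := congrArg (Subtype.val) h
        simpa using this
      have h2 : (x ^ p) • (w : M) = 0 := by
        have := congrArg (fun m => ((u⁻¹ : Rˣ) : R) • m) h1
        simpa [smul_smul, ← mul_assoc] using this
      have h3 : (algebraMap R A x) ^ p • (w : M) = 0 := by
        rw [← map_pow]
        exact h2
      exact Subtype.ext (htf _ p h3)
  haveI : Module.Free R W := Module.free_of_finite_type_torsion_free'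
  -- choose a basis of W = z^(n-1) M over R
  set B := Module.Free.chooseBasis R W with hB
  -- for each basis vector, choose preimages
  have hmem : ∀ i, ∃ v : F, z^(n-1) • (π v) = (B i : M) := by
    intro i
    obtain ⟨u, hu⟩ := (B i).2
    obtain ⟨v, hv⟩ := hπ u
    exact ⟨v, by simpa [hv] using hu⟩
  choose v hv using hmem
  -- the R-linear map W → F sending B i to z^(n-1) • v i
  set φ : W →ₗ[R] F := B.constr ℕ (fun i => z^(n-1) • v i) with hφ
  have hπφ : ∀ w : W, π (φ w) = (w : M) := by
    have : (LinearMap.restrictScalars R π) ∘ₗ φ = W.subtype := by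
      apply B.ext
      intro i
      simp only [LinearMap.coe_comp, Function.comp_apply, Submodule.coe_subtype, hφ,
        Module.Basis.constr_basis, LinearMap.coe_restrictScalars]
      rw [map_smul]
      exact hv i
    intro w
    exact congrArg (fun (g : W →ₗ[R] M) => g w) this
  -- z kills the image of φ
  have hzφ : ∀ w : W, z • (φ w) = 0 := by
    have : (LinearMap.restrictScalars R (z • (LinearMap.id : F →ₗ[A] F))) ∘ₗ φ = 0 := by
      apply B.ext
      intro i
      simp only [LinearMap.coe_comp, Function.comp_apply, hφ, Module.Basis.constr_basis,
        LinearMap.coe_restrictScalars, LinearMap.smul_apply, LinearMap.id_apply,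
        LinearMap.zero_apply]
      have hnn : n - 1 + 1 = n := Nat.succ_pred_eq_of_pos (Nat.pos_of_ne_zero hn)
      rw [smul_smul, ← pow_succ', hnn, zc_pow_n]
      exact zero_smul (Az R n) (v i)
    intro w
    exact congrArg (fun (g : W →ₗ[R] F) => g w) this
  have hmem' : ∀ u : M, z^(n-1) • u ∈ W := fun u => ⟨u, rfl⟩
  -- now build σ
  refine ⟨{ toFun := fun u => φ ⟨z^(n-1) • u, hmem' u⟩
            map_add' := ?_
            map_smul' := ?_ }, ?_⟩
  · intro u₁ u₂
    have heq : (⟨z^(n-1) • (u₁ + u₂), hmem' _⟩ : W)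
        = ⟨z^(n-1) • u₁, hmem' u₁⟩ + ⟨z^(n-1) • u₂, hmem' u₂⟩ :=
      Subtype.ext (smul_add _ u₁ u₂)
    rw [heq, map_add]
  · intro b u
    obtain ⟨r, c, rfl⟩ := zc_decomp R n b
    dsimp only [RingHom.id_apply]
    rw [← hz]
    have hnn : n - 1 + 1 = n := Nat.succ_pred_eq_of_pos (Nat.pos_of_ne_zero hn)
    have hsmul1 : z^(n-1) • ((algebraMap R A r + z * c) • u) = r • (z^(n-1) • u) := by
      rw [add_smul, smul_add, mul_smul (z) c u]
      rw [smul_smul (z^(n-1)) z, ← pow_succ, hnn, zc_pow_n]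
      have h0 : (0 : Az R n) • (c • u) = 0 := zero_smul (Az R n) (c • u)
      rw [h0, add_zero]
      rw [smul_smul, mul_comm, ← smul_smul]
      rfl
    have heq : (⟨z^(n-1) • ((algebraMap R A r + z * c) • u), hmem' _⟩ : W)
        = r • (⟨z^(n-1) • u, hmem' u⟩ : W) := Subtype.ext hsmul1
    rw [heq, map_smul]
    rw [add_smul, mul_comm z c, mul_smul]
    rw [hzφ ⟨z^(n-1) • u, hmem' u⟩, smul_zero, add_zero]
    rfl
  · apply LinearMap.ext
    intro u
    dsimp only [LinearMap.coe_comp, Function.comp_apply, LinearMap.coe_mk, AddHom.coe_mk,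
      LinearMap.smul_apply, LinearMap.id_apply]
    exact hπφ _

open CategoryTheory

/-- Let `R` be a DVR with uniformizer `x`, `A = R[z]/(z^n)`, and `M`, `N`
finitely generated `A`-modules with `M` having no nonzero element annihilated by a power of
`x`. Then `z^{n-1}` annihilates `Ext^1_A(M, N)`. -/
theorem stmt18 (R : Type) [CommRing R] [IsDomain R] [IsDiscreteValuationRing R] (n : ℕ)
    (x : R) (hx : Irreducible x)
    (M N : Type) [AddCommGroup M] [Module (Az R n) M] [Module.Finite (Az R n) M]
    [AddCommGroup N] [Module (Az R n) N] [Module.Finite (Az R n) N]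
    (htf : ∀ (u : M) (p : ℕ), (algebraMap R (Az R n) x) ^ p • u = 0 → u = 0) :
    ∀ e : ((Ext (Az R n) (ModuleCat.{0} (Az R n)) 1).obj
            (Opposite.op (ModuleCat.of (Az R n) M))).obj (ModuleCat.of (Az R n) N),
      (zc R n ^ (n - 1)) • e = 0 := by
  intro e
  by_cases hn : n = 0
  · -- trivial ring case
    subst hn
    haveI : Subsingleton (Az R 0) := by
      have h : (Ideal.span ({X ^ 0} : Set R[X])) = ⊤ := by
        simp [Ideal.span_singleton_one]
      exact Ideal.Quotient.subsingleton_iff.mpr h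
    haveI := Module.subsingleton (Az R 0)
      (((Ext (Az R 0) (ModuleCat.{0} (Az R 0)) 1).obj
        (Opposite.op (ModuleCat.of (Az R 0) M))).obj (ModuleCat.of (Az R 0) N))
    exact Subsingleton.elim _ _
  · set A := Az R n with hA
    set a : A := zc R n ^ (n-1) with ha
    set CC := ModuleCat.{0} A with hCC
    set MM : CC := ModuleCat.of A M with hMM
    set NN : CC := ModuleCat.of A N with hNN
    obtain ⟨P⟩ := (inferInstance : HasProjectiveResolution MM).out
    set K := P.complex.linearYonedaObj A NN with hK
    set S := K.sc' 0 1 2 with hS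
    set iso2 := K.homologyIsoSc' 0 1 2 (CochainComplex.prev_nat_succ 0)
      (CochainComplex.next ℕ 1) with hiso2
    set Φ : (((Ext A CC 1).obj (Opposite.op MM)).obj NN) ⟶ S.moduleCatLeftHomologyData.H :=
      (P.isoExt 1 NN).hom ≫ iso2.hom ≫ S.moduleCatHomologyIso.hom with hΦ
    have hinj : Function.Injective Φ := by
      rw [← ModuleCat.mono_iff_injective]
      infer_instance
    -- the key vanishing statement at the level of the explicit homology module
    have hall : ∀ y : S.moduleCatLeftHomologyData.H, a • y = 0 := by
      intro y
      obtain ⟨c, rfl⟩ := Submodule.Quotient.mk_surjective _ y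
      show a • (Submodule.Quotient.mk c : LinearMap.ker S.g.hom ⧸
        LinearMap.range S.moduleCatToCycles) = 0
      rw [← Submodule.Quotient.mk_smul, Submodule.Quotient.mk_eq_zero]
      -- c is a 1-cocycle: a map `P₁ ⟶ NN` vanishing on the image of `d 2 1`
      set φ : P.complex.X 1 ⟶ NN := (c : S.X₂) with hφc
      have hφ : ∀ q, φ (P.complex.d 2 1 q) = 0 := by
        intro q
        have h : P.complex.d 2 1 ≫ φ = 0 := c.2
        have := congr($h q)
        exact this
      -- the augmentation map
      set πM : P.complex.X 0 ⟶ MM := P.π.f 0 with hπM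
      have hsurj : Function.Surjective πM := by
        rw [← ModuleCat.epi_iff_surjective]
        change Epi (P.π.f 0)
        infer_instance
      have hd10π : P.complex.d 1 0 ≫ πM = 0 := P.complex_d_comp_π_f_zero
      have hd10π' : ∀ p, πM (P.complex.d 1 0 p) = 0 :=
        fun p => by have := congr($hd10π p); exact this
      have hex0 : ∀ u, πM u = 0 → ∃ p, P.complex.d 1 0 p = u := by
        have hT : (ShortComplex.mk (P.complex.d 1 0) πM hd10π).Exact :=
          ShortComplex.exact_of_g_is_cokernel _ P.isColimitCokernelCofork
        intro u hu
        exact (ShortComplex.moduleCat_exact_iff _).1 hT u hu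
      have hex1 : ∀ p : P.complex.X 1, P.complex.d 1 0 p = 0 →
          ∃ q : P.complex.X 2, P.complex.d 2 1 q = p := by
        intro p hp
        exact (ShortComplex.moduleCat_exact_iff _).1 (P.exact_succ 0) p hp
      -- the lift σ of a • id along πM
      obtain ⟨σ, hσ⟩ := key_lift R n hn x hx M htf (P.complex.X 0) πM.hom hsurj
      have hσ' : ∀ u : M, πM (σ u) = a • u := fun u => LinearMap.congr_fun hσ u
      -- the kernel of πM
      set Kr : Submodule A (P.complex.X 0) := LinearMap.ker πM.hom with hKr
      have hd10mem : ∀ p, P.complex.d 1 0 p ∈ Kr := fun p => hd10π' p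
      set ρ : P.complex.X 1 →ₗ[A] Kr :=
        LinearMap.codRestrict Kr (P.complex.d 1 0).hom hd10mem with hρdef
      have hρ : Function.Surjective ρ := by
        rintro ⟨u, hu⟩
        obtain ⟨p, hp⟩ := hex0 u hu
        exact ⟨p, Subtype.ext hp⟩
      have hkill : LinearMap.ker ρ ≤ LinearMap.ker φ.hom := by
        intro p hp
        have hp' : P.complex.d 1 0 p = 0 := by
          have := congrArg Subtype.val (hp : ρ p = 0)
          exact this
        obtain ⟨q, hq⟩ := hex1 p hp'
        show φ p = 0
        rw [← hq]
        exact hφ q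
      -- the induced map on the kernel of πM
      set φbar : Kr →ₗ[A] NN :=
        ((LinearMap.ker ρ).liftQ φ.hom hkill) ∘ₗ
          ((LinearMap.quotKerEquivOfSurjective ρ hρ).symm : Kr →ₗ[A] _) with hφbardef
      have hφbar : ∀ p, φbar (ρ p) = φ p := by
        intro p
        have h1 : (LinearMap.quotKerEquivOfSurjective ρ hρ).symm (ρ p)
            = Submodule.Quotient.mk p := by
          rw [LinearEquiv.symm_apply_eq]
          rfl
        show ((LinearMap.ker ρ).liftQ φ.hom hkill)
          ((LinearMap.quotKerEquivOfSurjective ρ hρ).symm (ρ p)) = φ p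
        rw [h1]
        rfl
      -- the corrected endomorphism of P₀ with values in ker πM
      set θ : P.complex.X 0 →ₗ[A] P.complex.X 0 :=
        a • LinearMap.id - σ ∘ₗ (πM.hom : P.complex.X 0 →ₗ[A] M) with hθdef
      have hθmem : ∀ u, θ u ∈ Kr := by
        intro u
        show πM (θ u) = 0
        have : θ u = a • u - σ (πM u) := rfl
        rw [this, map_sub, map_smul, hσ' (πM u), sub_self]
      set θ' : P.complex.X 0 →ₗ[A] Kr := LinearMap.codRestrict Kr θ hθmem with hθ'def
      set ψ : P.complex.X 0 ⟶ NN := ModuleCat.ofHom (φbar ∘ₗ θ') with hψdef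
      refine ⟨ψ, Subtype.ext ?_⟩
      show P.complex.d 1 0 ≫ ψ = a • φ
      apply ModuleCat.hom_ext
      apply LinearMap.ext
      intro p
      show φbar (θ' (P.complex.d 1 0 p)) = (a • φ) p
      have hθd : θ' (P.complex.d 1 0 p) = a • ρ p := by
        apply Subtype.ext
        show θ (P.complex.d 1 0 p) = a • P.complex.d 1 0 p
        have : θ (P.complex.d 1 0 p)
            = a • P.complex.d 1 0 p - σ (πM (P.complex.d 1 0 p)) := rfl
        rw [this, hd10π' p, map_zero, sub_zero]
      rw [hθd, map_smul, hφbar p]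
      rfl
    apply hinj
    rw [map_smul, map_zero, hall]
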